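/- Let T_N be negative binomial with parameters N ≥ 2 and p ∈ (0,1). Then E[((N-1)/(T_N + N - 1))^2] = p^N · ₂F₁(N-1, N-1; N; 1-p). -/

import Mathlib

/-- The Pochhammer symbol (rising factorial) `(x)ₙ = x(x+1)⋯(x+n-1)`. -/
noncomputable def poch (x : ℝ) (n : ℕ) : ℝ := ∏ i ∈ Finset.range n, (x + i)

/-- The Gauss hypergeometric series `₂F₁(a, b; c; z)`. -/
noncomputable def hyp2F1 (a b c z : ℝ) : ℝ :=
  ∑' n : ℕ, poch a n * poch b n / (poch c n * n.factorial) * z ^ n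

lemma poch_nat_cast (m : ℕ) : ∀ t : ℕ, poch (m : ℝ) t = (m.ascFactorial t : ℝ)
  | 0 => by simp [poch]
  | t + 1 => by
    rw [poch, Finset.prod_range_succ, ← poch, poch_nat_cast m t, Nat.ascFactorial_succ]
    push_cast; ring

lemma poch_pos {x : ℝ} (hx : 0 < x) (t : ℕ) : 0 < poch x t := by
  refine Finset.prod_pos fun i _ => ?_
  positivity

/-- Second moment of the MVU estimator: for `T_N` negative binomial with
parameters `N ≥ 2` and `p ∈ (0,1)`,
`E[((N-1)/(T_N + N - 1))²] = p^N · ₂F₁(N-1, N-1; N; 1-p)`. -/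
theorem mvu_estimator_second_moment (N : ℕ) (hN : 2 ≤ N) (p : ℝ)
    (hp : 0 < p) (hp1 : p < 1) :
    (∑' t : ℕ, (((N : ℝ) - 1) / (t + N - 1)) ^ 2 *
        (((t + N - 1).choose (N - 1) : ℝ) * p ^ N * (1 - p) ^ t))
      = p ^ N * hyp2F1 ((N : ℝ) - 1) ((N : ℝ) - 1) N (1 - p) := by
  obtain ⟨M, rfl⟩ : ∃ M, N = M + 1 := ⟨N - 1, by omega⟩
  have hM : 1 ≤ M := by omega
  have hMcast : ((M : ℝ) + 1) - 1 = (M : ℝ) := by ring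
  rw [hyp2F1, ← tsum_mul_left]
  refine tsum_congr fun t => ?_
  -- nat identities
  have h1 : (M + 1).ascFactorial t = t.factorial * (t + M).choose M := by
    rw [Nat.ascFactorial_eq_factorial_mul_choose']
    congr 1
    have e : M + 1 + t - 1 = t + M := by omega
    rw [e]
    have := Nat.choose_symm (Nat.le_add_right t M)
    simpa using this.symm
  have h2 : M * (M + 1).ascFactorial t = (M + t) * M.ascFactorial t := by
    have := Nat.succ_ascFactorial M t
    simpa using this
  -- move to ℝ
  have hb : poch ((M : ℝ) + 1) t = ((M + 1).ascFactorial t : ℝ) := by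
    have := poch_nat_cast (M + 1) t
    push_cast at this ⊢
    linarith [this]
  have ha : poch (((M : ℝ) + 1) - 1) t = (M.ascFactorial t : ℝ) := by
    rw [hMcast, poch_nat_cast]
  have hbpos : (0 : ℝ) < poch ((M : ℝ) + 1) t := poch_pos (by positivity) t
  have hden : (0 : ℝ) < (t : ℝ) + (M + 1) - 1 := by
    have : (1 : ℝ) ≤ (M : ℝ) := by exact_mod_cast hM
    linarith [Nat.cast_nonneg (α := ℝ) t]
  have hfac : (0 : ℝ) < (t.factorial : ℝ) := by positivity
  push_cast
  rw [ha, hb]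
  have h1' : ((M + 1).ascFactorial t : ℝ)
      = (t.factorial : ℝ) * ((t + M).choose M : ℝ) := by
    exact_mod_cast congrArg (Nat.cast : ℕ → ℝ) h1
  have h2' : (M : ℝ) * ((M + 1).ascFactorial t : ℝ)
      = ((M : ℝ) + t) * (M.ascFactorial t : ℝ) := by
    exact_mod_cast congrArg (Nat.cast : ℕ → ℝ) h2
  have hbne : ((M + 1).ascFactorial t : ℝ) ≠ 0 := by rw [← hb]; exact hbpos.ne'
  push_cast at h1' h2'
  rw [show t + (M + 1) - 1 = t + M by omega]
  field_simp
  linear_combination ((1 - p) ^ t *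
      ((M : ℝ) * ((M + 1).ascFactorial t : ℝ) + ((M : ℝ) + t) * (M.ascFactorial t : ℝ))) * h2'
    - ((M : ℝ) ^ 2 * (1 - p) ^ t * ((M + 1).ascFactorial t : ℝ)) * h1'
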